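/- arXiv:2211.07935 — 5 statements merged into one kernel-verified Lean document; each statement's English description precedes it below -/
import Mathlib

section
/- Let X be a real normed linear space, α, β ∈ [0,1) with 0 < α+β < 1, and u, v ∈ X. If ρ_{α,β}(u,v) = 0, then u is Birkhoff–James orthogonal to v, i.e., ‖u + tv‖ ≥ ‖u‖ for all t ∈ ℝ. -/
noncomputable def rhoP {X : Type*} [NormedAddCommGroup X] [NormedSpace ℝ X] (u v : X) : ℝ :=
  Filter.limUnder (nhdsWithin (0:ℝ) (Set.Ioi 0)) (fun t : ℝ => (‖u + t • v‖^2 - ‖u‖^2) / (2*t))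

noncomputable def rhoM {X : Type*} [NormedAddCommGroup X] [NormedSpace ℝ X] (u v : X) : ℝ :=
  Filter.limUnder (nhdsWithin (0:ℝ) (Set.Iio 0)) (fun t : ℝ => (‖u + t • v‖^2 - ‖u‖^2) / (2*t))

noncomputable def rhoAB {X : Type*} [NormedAddCommGroup X] [NormedSpace ℝ X]
    (α β : ℝ) (u v : X) : ℝ := α * rhoM u v + β * rhoP u v

section Aux

open Set Filter

variable {X : Type*} [NormedAddCommGroup X] [NormedSpace ℝ X]

lemma aux_convex (u v : X) :
    ConvexOn ℝ Set.univ (fun t : ℝ => ‖u + t • v‖^2) := by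
  constructor
  · exact convex_univ
  · intro x _ y _ a b ha hb hab
    simp only [smul_eq_mul]
    have key : u + (a*x + b*y) • v = a • (u + x • v) + b • (u + y • v) := by
      have h2 : (1:ℝ) = a + b := hab.symm
      linear_combination (norm := module) h2 • u
    have h1 : ‖u + (a*x + b*y) • v‖ ≤ a * ‖u + x • v‖ + b * ‖u + y • v‖ := by
      rw [key]
      refine (norm_add_le _ _).trans ?_
      rw [norm_smul, norm_smul, Real.norm_eq_abs, Real.norm_eq_abs,
        abs_of_nonneg ha, abs_of_nonneg hb]
    nlinarith [norm_nonneg (u + (a*x+b*y) • v), norm_nonneg (u + x • v),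
      norm_nonneg (u + y • v),
      mul_nonneg (mul_nonneg ha hb) (sq_nonneg (‖u + x • v‖ - ‖u + y • v‖)),
      mul_nonneg ha hb, sq_nonneg (‖u + x • v‖ + ‖u + y • v‖)]

section
variable (u v : X)

/-- The difference quotient. -/
noncomputable def Q (u v : X) (t : ℝ) : ℝ := (‖u + t • v‖^2 - ‖u‖^2) / (2*t)

lemma Q_mono (u v : X) {s t : ℝ} (hs : s ≠ 0) (ht : t ≠ 0) (hst : s ≤ t) :
    Q u v s ≤ Q u v t := by
  have := (aux_convex u v).secant_mono (a := 0) (x := s) (y := t)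
    (mem_univ _) (mem_univ _) (mem_univ _) hs ht hst
  simp only [zero_smul, add_zero, sub_zero] at this
  have hs2 : Q u v s = ((‖u + s • v‖^2 - ‖u‖^2) / s) / 2 := by
    unfold Q; rw [div_div]; ring_nf
  have ht2 : Q u v t = ((‖u + t • v‖^2 - ‖u‖^2) / t) / 2 := by
    unfold Q; rw [div_div]; ring_nf
  rw [hs2, ht2]
  linarith

lemma tendsto_P : Tendsto (Q u v) (nhdsWithin (0:ℝ) (Set.Ioi 0))
    (nhds (sInf (Q u v '' Ioi 0))) := by
  apply MonotoneOn.tendsto_nhdsGT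
  · intro s hs t ht hst
    exact Q_mono u v (ne_of_gt hs) (ne_of_gt ht) hst
  · refine ⟨Q u v (-1), ?_⟩
    rintro x ⟨t, ht, rfl⟩
    exact Q_mono u v (by norm_num) (ne_of_gt ht) (by linarith [mem_Ioi.mp ht])

lemma tendsto_M : Tendsto (Q u v) (nhdsWithin (0:ℝ) (Set.Iio 0))
    (nhds (sSup (Q u v '' Iio 0))) := by
  apply MonotoneOn.tendsto_nhdsLT
  · intro s hs t ht hst
    exact Q_mono u v (ne_of_lt hs) (ne_of_lt ht) hst
  · refine ⟨Q u v 1, ?_⟩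
    rintro x ⟨t, ht, rfl⟩
    exact Q_mono u v (ne_of_lt ht) (by norm_num) (by linarith [mem_Iio.mp ht])

end

theorem stmt_5' {X : Type*} [NormedAddCommGroup X] [NormedSpace ℝ X]
    (u v : X)
    (α β : ℝ) (hα : α ∈ Set.Ico (0:ℝ) 1) (hβ : β ∈ Set.Ico (0:ℝ) 1)
    (hab : 0 < α + β) (hab1 : α + β < 1)
    (h : α * (limUnder (nhdsWithin (0:ℝ) (Set.Iio 0)) (Q u v))
        + β * (limUnder (nhdsWithin (0:ℝ) (Set.Ioi 0)) (Q u v)) = 0) :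
    ∀ t : ℝ, ‖u + t • v‖ ≥ ‖u‖ := by
  set L := sInf (Q u v '' Ioi 0) with hL
  set M := sSup (Q u v '' Iio 0) with hM
  have hPL : limUnder (nhdsWithin (0:ℝ) (Set.Ioi 0)) (Q u v) = L :=
    (tendsto_P u v).limUnder_eq
  have hML : limUnder (nhdsWithin (0:ℝ) (Set.Iio 0)) (Q u v) = M :=
    (tendsto_M u v).limUnder_eq
  rw [hPL, hML] at h
  -- L ≤ Q t for all t > 0
  have hbddB : Q u v (-1) ∈ lowerBounds (Q u v '' Ioi 0) := by
    rintro x ⟨s, hs, rfl⟩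
    exact Q_mono u v (by norm_num) (ne_of_gt hs) (by linarith [mem_Ioi.mp hs])
  have hbddA : Q u v 1 ∈ upperBounds (Q u v '' Iio 0) := by
    rintro x ⟨s, hs, rfl⟩
    exact Q_mono u v (ne_of_lt hs) (by norm_num) (by linarith [mem_Iio.mp hs])
  have hneB : Q u v 1 ∈ Q u v '' Ioi 0 := ⟨1, by norm_num, rfl⟩
  have hneA : Q u v (-1) ∈ Q u v '' Iio 0 := ⟨-1, by norm_num, rfl⟩
  have hLle : ∀ t > (0:ℝ), L ≤ Q u v t := fun t ht =>
    csInf_le ⟨_, hbddB⟩ (mem_image_of_mem _ ht)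
  have hMge : ∀ t < (0:ℝ), Q u v t ≤ M := fun t ht =>
    le_csSup ⟨_, hbddA⟩ (mem_image_of_mem _ ht)
  -- M ≤ L
  have hMleL : M ≤ L := by
    have hmain : ∀ t > (0:ℝ), M ≤ Q u v t := by
      intro t ht
      apply csSup_le ⟨_, hneA⟩
      rintro x ⟨s, hs, rfl⟩
      exact Q_mono u v (ne_of_lt hs) (ne_of_gt ht) (by linarith [mem_Iio.mp hs])
    apply le_csInf ⟨_, hneB⟩
    rintro x ⟨s, hs, rfl⟩
    exact hmain s hs
  -- signs
  have hM0 : M ≤ 0 := by nlinarith [mul_le_mul_of_nonneg_left hMleL hβ.1]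
  have hL0 : 0 ≤ L := by nlinarith [mul_le_mul_of_nonneg_left hMleL hα.1]
  intro t
  rcases lt_trichotomy t 0 with ht | ht | ht
  · have h1 : Q u v t ≤ 0 := le_trans (hMge t ht) hM0
    have h2 : ‖u‖^2 ≤ ‖u + t • v‖^2 := by
      have : (‖u + t • v‖^2 - ‖u‖^2) / (2*t) ≤ 0 := h1
      rw [div_nonpos_iff] at this
      rcases this with ⟨h3, _⟩ | ⟨h3, h4⟩
      · linarith
      · linarith
    nlinarith [norm_nonneg (u + t • v), norm_nonneg u]
  · subst ht; simp
  · have h1 : 0 ≤ Q u v t := le_trans hL0 (hLle t ht)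
    have h2 : ‖u‖^2 ≤ ‖u + t • v‖^2 := by
      have : 0 ≤ (‖u + t • v‖^2 - ‖u‖^2) / (2*t) := h1
      rw [div_nonneg_iff] at this
      rcases this with ⟨h3, _⟩ | ⟨_, h4⟩
      · linarith
      · linarith
    nlinarith [norm_nonneg (u + t • v), norm_nonneg u]

end Aux

theorem stmt_5 {X : Type*} [NormedAddCommGroup X] [NormedSpace ℝ X]
    (u v : X)
    (α β : ℝ) (hα : α ∈ Set.Ico (0:ℝ) 1) (hβ : β ∈ Set.Ico (0:ℝ) 1)
    (hab : 0 < α + β) (hab1 : α + β < 1)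
    (h : rhoAB α β u v = 0) :
    ∀ t : ℝ, ‖u + t • v‖ ≥ ‖u‖ :=
  stmt_5' u v α β hα hβ hab hab1 h
end

section
/- In ℝ² with the max norm ‖(x,y)‖ = max{|x|,|y|}, the vectors u = (1,1) and v = (1,−1) are Birkhoff–James orthogonal, but for α = 1/2, β = 1/3, ρ_{α,β}(u,v) = −α + β ≠ 0, so u is not ρ_{α,β}-orthogonal to v. Hence Birkhoff–James orthogonality does not imply ρ_{α,β}-orthogonality in general. -/
lemma norm_key (t : ℝ) :
    ‖((1:ℝ),(1:ℝ)) + t • ((1:ℝ),(-1:ℝ))‖ = 1 + |t| := by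
  have : ((1:ℝ),(1:ℝ)) + t • ((1:ℝ),(-1:ℝ)) = (1 + t, 1 - t) := by
    simp [Prod.ext_iff]; ring
  rw [this, Prod.norm_def]
  simp only [Real.norm_eq_abs]
  rcases le_or_gt 0 t with h | h
  · rw [abs_of_nonneg h, abs_of_nonneg (by linarith), max_eq_left]
    rw [abs_le]; constructor <;> linarith
  · rw [abs_of_neg h, abs_of_nonneg (show (0:ℝ) ≤ 1 - t by linarith), max_eq_right]
    · ring
    rw [abs_le]; constructor <;> linarith

lemma rhoP_key : rhoP ((1:ℝ),(1:ℝ)) ((1:ℝ),(-1:ℝ)) = 1 := by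
  apply Filter.Tendsto.limUnder_eq
  have h : ∀ t ∈ Set.Ioi (0:ℝ),
      (‖((1:ℝ),(1:ℝ)) + t • ((1:ℝ),(-1:ℝ))‖^2 - ‖((1:ℝ),(1:ℝ))‖^2) / (2*t)
        = 1 + t/2 := by
    intro t ht
    rw [norm_key]
    have hn : ‖((1:ℝ),(1:ℝ))‖ = 1 := by rw [Prod.norm_def]; simp
    rw [hn, abs_of_pos ht]
    have ht' : t ≠ 0 := ne_of_gt ht
    field_simp
    ring
  apply Filter.Tendsto.congr' (Filter.eventuallyEq_of_mem self_mem_nhdsWithin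
    fun t ht => (h t ht).symm)
  have : Filter.Tendsto (fun t : ℝ => 1 + t/2) (nhds 0) (nhds 1) := by
    have hc : Continuous (fun t : ℝ => 1 + t/2) := by continuity
    simpa using hc.tendsto 0
  exact this.mono_left nhdsWithin_le_nhds

lemma rhoM_key : rhoM ((1:ℝ),(1:ℝ)) ((1:ℝ),(-1:ℝ)) = -1 := by
  apply Filter.Tendsto.limUnder_eq
  have h : ∀ t ∈ Set.Iio (0:ℝ),
      (‖((1:ℝ),(1:ℝ)) + t • ((1:ℝ),(-1:ℝ))‖^2 - ‖((1:ℝ),(1:ℝ))‖^2) / (2*t)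
        = -1 + t/2 := by
    intro t ht
    rw [norm_key]
    have hn : ‖((1:ℝ),(1:ℝ))‖ = 1 := by rw [Prod.norm_def]; simp
    rw [hn, abs_of_neg ht]
    have ht' : t ≠ 0 := ne_of_lt ht
    field_simp
    ring
  apply Filter.Tendsto.congr' (Filter.eventuallyEq_of_mem self_mem_nhdsWithin
    fun t ht => (h t ht).symm)
  have : Filter.Tendsto (fun t : ℝ => -1 + t/2) (nhds 0) (nhds (-1)) := by
    have hc : Continuous (fun t : ℝ => -1 + t/2) := by continuity
    simpa using hc.tendsto 0
  exact this.mono_left nhdsWithin_le_nhds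

theorem stmt_6 :
    let u : ℝ × ℝ := (1, 1)
    let v : ℝ × ℝ := (1, -1)
    (∀ t : ℝ, ‖u + t • v‖ ≥ ‖u‖) ∧
    rhoAB (1/2 : ℝ) (1/3 : ℝ) u v = -(1/2 : ℝ) + 1/3 ∧
    rhoAB (1/2 : ℝ) (1/3 : ℝ) u v ≠ 0 := by
  intro u v
  have hn : ‖u‖ = 1 := by rw [Prod.norm_def]; simp [u]
  have hab : rhoAB (1/2 : ℝ) (1/3 : ℝ) u v = -(1/2 : ℝ) + 1/3 := by
    rw [rhoAB, show u = ((1:ℝ),(1:ℝ)) from rfl, show v = ((1:ℝ),(-1:ℝ)) from rfl,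
      rhoP_key, rhoM_key]; ring
  refine ⟨fun t => ?_, hab, by rw [hab]; norm_num⟩
  rw [hn, show u = ((1:ℝ),(1:ℝ)) from rfl, show v = ((1:ℝ),(-1:ℝ)) from rfl, norm_key]
  have := abs_nonneg t
  linarith
end

section
/- In ℝ² with the max norm, for any α, β ∈ (0,1) with α+β < 1, the vectors u = (1,1) and v = (−1/(2α), 1/(2β)) satisfy ρ_{α,β}(u,v) = 0 (i.e., u ⊥_{ρ_{α,β}} v), while ρ₊(u,v) = 1/(2β) ≠ 0, ρ₋(u,v) = −1/(2α) ≠ 0, and (ρ₊(u,v)+ρ₋(u,v))/2 ≠ 0 when α ≠ β. -/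
lemma rhoP_calc (α β : ℝ) (hα : 0 < α) (hβ : 0 < β) :
    rhoP ((1,1) : ℝ × ℝ) ((-1/(2*α), 1/(2*β)) : ℝ × ℝ) = 1/(2*β) := by
  have hEq : (fun t : ℝ => (‖((1,1) : ℝ × ℝ) + t • ((-1/(2*α), 1/(2*β)) : ℝ × ℝ)‖^2
        - ‖((1,1) : ℝ × ℝ)‖^2) / (2*t))
      =ᶠ[nhdsWithin (0:ℝ) (Set.Ioi 0)] (fun t : ℝ => 1/(2*β) + t/(8*β^2)) := by
    filter_upwards [Ioo_mem_nhdsGT_of_mem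
      (Set.mem_Ico.mpr ⟨le_refl (0:ℝ), (by positivity : (0:ℝ) < 2*α)⟩)] with t ht
    obtain ⟨ht0, ht2⟩ := ht
    have hq : t * (1/(2*α)) < 1 := by
      rw [mul_one_div]; exact (div_lt_one (by positivity)).mpr ht2
    have hnorm : ‖((1,1) : ℝ × ℝ) + t • ((-1/(2*α), 1/(2*β)) : ℝ × ℝ)‖
        = 1 + t * (1/(2*β)) := by
      have hpos2 : 0 < 1 + t * (1/(2*β)) := by positivity
      have h2 : |(1:ℝ) + t * (1/(2*β))| = 1 + t * (1/(2*β)) := abs_of_pos hpos2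
      have h1 : |(1:ℝ) + t * (-1/(2*α))| ≤ 1 + t * (1/(2*β)) := by
        have hpos3 : 0 ≤ t * (1/(2*β)) := by positivity
        have hneg : t * (-1/(2*α)) = -(t*(1/(2*α))) := by ring
        have hq0 : 0 ≤ t * (1/(2*α)) := by positivity
        rw [abs_le]
        constructor
        · linarith
        · linarith
      simp only [Prod.norm_def, Prod.fst_add, Prod.snd_add, Prod.smul_fst, Prod.smul_snd,
        smul_eq_mul, Real.norm_eq_abs, Prod.fst, Prod.snd]
      rw [max_eq_right]
      · exact h2
      · rw [h2]; exact h1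
    rw [hnorm]
    have hβ' : (β:ℝ) ≠ 0 := ne_of_gt hβ
    have ht' : (t:ℝ) ≠ 0 := ne_of_gt ht0
    have hn1 : ‖((1,1) : ℝ × ℝ)‖ = 1 := by
      simp [Prod.norm_def, Real.norm_eq_abs]
    rw [hn1]
    field_simp
    ring
  have hT2 : Filter.Tendsto (fun t : ℝ => 1/(2*β) + t/(8*β^2))
      (nhdsWithin (0:ℝ) (Set.Ioi 0)) (nhds (1/(2*β))) := by
    have : Filter.Tendsto (fun t : ℝ => 1/(2*β) + t/(8*β^2)) (nhds 0)
        (nhds (1/(2*β) + 0/(8*β^2))) := by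
      apply Continuous.tendsto; continuity
    simpa using this.mono_left nhdsWithin_le_nhds
  exact (hT2.congr' hEq.symm).limUnder_eq

lemma rhoM_calc (α β : ℝ) (hα : 0 < α) (hβ : 0 < β) :
    rhoM ((1,1) : ℝ × ℝ) ((-1/(2*α), 1/(2*β)) : ℝ × ℝ) = -1/(2*α) := by
  have hEq : (fun t : ℝ => (‖((1,1) : ℝ × ℝ) + t • ((-1/(2*α), 1/(2*β)) : ℝ × ℝ)‖^2
        - ‖((1,1) : ℝ × ℝ)‖^2) / (2*t))
      =ᶠ[nhdsWithin (0:ℝ) (Set.Iio 0)] (fun t : ℝ => -1/(2*α) + t/(8*α^2)) := by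
    filter_upwards [Ioo_mem_nhdsLT_of_mem
      (Set.mem_Ioc.mpr ⟨(by linarith : -(2*β) < (0:ℝ)), le_refl (0:ℝ)⟩)] with t ht
    obtain ⟨ht2, ht0⟩ := ht
    have hpos : 0 < -t := by linarith
    have hq : (-t) * (1/(2*β)) < 1 := by
      rw [mul_one_div]; exact (div_lt_one (by positivity)).mpr (by linarith)
    have hnorm : ‖((1,1) : ℝ × ℝ) + t • ((-1/(2*α), 1/(2*β)) : ℝ × ℝ)‖
        = 1 + t * (-1/(2*α)) := by
      have hq2 : 0 < (-t) * (1/(2*α)) := by positivity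
      have hq3 : 0 < (-t) * (1/(2*β)) := by positivity
      have hneg : t * (-1/(2*α)) = (-t)*(1/(2*α)) := by ring
      have hneg2 : t * (1/(2*β)) = -((-t)*(1/(2*β))) := by ring
      have hpos1 : 0 < 1 + t * (-1/(2*α)) := by linarith
      have h2 : |(1:ℝ) + t * (-1/(2*α))| = 1 + t * (-1/(2*α)) := abs_of_pos hpos1
      have h1 : |(1:ℝ) + t * (1/(2*β))| ≤ 1 + t * (-1/(2*α)) := by
        rw [abs_le]
        constructor
        · linarith
        · linarith
      simp only [Prod.norm_def, Prod.fst_add, Prod.snd_add, Prod.smul_fst, Prod.smul_snd,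
        smul_eq_mul, Real.norm_eq_abs, Prod.fst, Prod.snd]
      rw [max_eq_left]
      · exact h2
      · rw [h2]; exact h1
    rw [hnorm]
    have hα' : (α:ℝ) ≠ 0 := ne_of_gt hα
    have ht' : (t:ℝ) ≠ 0 := ne_of_lt ht0
    have hn1 : ‖((1,1) : ℝ × ℝ)‖ = 1 := by
      simp [Prod.norm_def, Real.norm_eq_abs]
    rw [hn1]
    field_simp
    ring
  have hT2 : Filter.Tendsto (fun t : ℝ => -1/(2*α) + t/(8*α^2))
      (nhdsWithin (0:ℝ) (Set.Iio 0)) (nhds (-1/(2*α))) := by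
    have : Filter.Tendsto (fun t : ℝ => -1/(2*α) + t/(8*α^2)) (nhds 0)
        (nhds (-1/(2*α) + 0/(8*α^2))) := by
      apply Continuous.tendsto; continuity
    simpa using this.mono_left nhdsWithin_le_nhds
  exact (hT2.congr' hEq.symm).limUnder_eq

theorem stmt_7 (α β : ℝ) (hα : α ∈ Set.Ioo (0:ℝ) 1) (hβ : β ∈ Set.Ioo (0:ℝ) 1)
    (hab1 : α + β < 1) :
    let u : ℝ × ℝ := (1, 1)
    let v : ℝ × ℝ := (-1/(2*α), 1/(2*β))
    rhoAB α β u v = 0 ∧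
    rhoP u v = 1/(2*β) ∧ rhoM u v = -1/(2*α) ∧
    rhoP u v ≠ 0 ∧ rhoM u v ≠ 0 ∧
    (α ≠ β → (rhoM u v + rhoP u v) / 2 ≠ 0) := by
  intro u v
  obtain ⟨hα0, hα1⟩ := hα
  obtain ⟨hβ0, hβ1⟩ := hβ
  have hP := rhoP_calc α β hα0 hβ0
  have hM := rhoM_calc α β hα0 hβ0
  have hα' : (α:ℝ) ≠ 0 := ne_of_gt hα0
  have hβ' : (β:ℝ) ≠ 0 := ne_of_gt hβ0
  refine ⟨?_, hP, hM, ?_, ?_, ?_⟩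
  · rw [rhoAB, hP, hM]; field_simp; ring
  · rw [hP]; positivity
  · rw [hM, neg_div]
    intro h
    have h2 : (0:ℝ) < 1/(2*α) := by positivity
    have := neg_eq_zero.mp h
    linarith
  · intro hne h
    rw [hM, hP, neg_div] at h
    have h' : 1/(2*β) = 1/(2*α) := by linarith
    rw [div_eq_div_iff (by positivity) (by positivity)] at h'
    exact hne (by linarith)
end

section
/- Let X be a real normed linear space and α, β ∈ [0,1), α ≠ β, with 0 < α+β < 1. Then Birkhoff–James orthogonality coincides with ρ_{α,β}-orthogonality on X if and only if X is smooth (equivalently, ρ₋(u,v) = ρ₊(u,v) for all u, v ∈ X). -/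
open Set Filter Topology

section Aux
variable {X : Type*} [NormedAddCommGroup X] [NormedSpace ℝ X]

/-- The difference quotient of the squared norm. -/
noncomputable def myq (u v : X) (t : ℝ) : ℝ := (‖u + t • v‖^2 - ‖u‖^2) / (2*t)

lemma convex_f (u v : X) : ConvexOn ℝ univ (fun t : ℝ => ‖u + t • v‖^2) := by
  have h1 : ConvexOn ℝ univ (fun t : ℝ => ‖u + t • v‖) := by
    have h := (convexOn_univ_norm (E := X)).comp_affineMap
      (AffineMap.lineMap u (u + v) : ℝ →ᵃ[ℝ] X)
    have he : (fun t : ℝ => ‖u + t • v‖) =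
        ((norm : X → ℝ) ∘ (AffineMap.lineMap u (u + v) : ℝ →ᵃ[ℝ] X)) := by
      funext t
      simp only [Function.comp_apply, AffineMap.lineMap_apply]
      congr 1
      simp [vsub_eq_sub, vadd_eq_add]
      abel
    rw [he]
    simpa using h
  have h2 := h1.pow (fun x _ => norm_nonneg _) 2
  have : (fun t : ℝ => ‖u + t • v‖^2) = ((fun t : ℝ => ‖u + t • v‖) ^ 2) := by
    funext t; simp [Pi.pow_apply]
  rw [this]; exact h2

lemma q_mono (u v : X) {s t : ℝ} (hs : s ≠ 0) (ht : t ≠ 0) (hst : s ≤ t) :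
    myq u v s ≤ myq u v t := by
  have h := (convex_f u v).secant_mono (a := 0) (mem_univ _) (mem_univ _) (mem_univ _) hs ht hst
  simp only [zero_smul, add_zero, sub_zero] at h
  have e : ∀ r : ℝ, myq u v r = ((‖u + r • v‖^2 - ‖u‖^2) / r) / 2 := by
    intro r; unfold myq; ring
  rw [e, e]; linarith

lemma tendsto_rhoP (u v : X) : Tendsto (myq u v) (𝓝[>] (0:ℝ)) (𝓝 (rhoP u v)) := by
  have hm : MonotoneOn (myq u v) (Ioi 0) := fun s hs t ht hst =>
    q_mono u v (ne_of_gt hs) (ne_of_gt ht) hst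
  have hb : BddBelow (myq u v '' Ioi 0) := by
    refine ⟨myq u v (-1), ?_⟩
    rintro _ ⟨t, ht, rfl⟩
    exact q_mono u v (by norm_num) (ne_of_gt ht) (by linarith [mem_Ioi.mp ht])
  have h := hm.tendsto_nhdsGT hb
  have : rhoP u v = sInf (myq u v '' Ioi 0) := h.limUnder_eq
  rw [this]; exact h

lemma tendsto_rhoM (u v : X) : Tendsto (myq u v) (𝓝[<] (0:ℝ)) (𝓝 (rhoM u v)) := by
  have hm : MonotoneOn (myq u v) (Iio 0) := fun s hs t ht hst =>
    q_mono u v (ne_of_lt hs) (ne_of_lt ht) hst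
  have hb : BddAbove (myq u v '' Iio 0) := by
    refine ⟨myq u v 1, ?_⟩
    rintro _ ⟨t, ht, rfl⟩
    exact q_mono u v (ne_of_lt ht) (by norm_num) (by linarith [mem_Iio.mp ht])
  have h := hm.tendsto_nhdsLT hb
  have : rhoM u v = sSup (myq u v '' Iio 0) := h.limUnder_eq
  rw [this]; exact h

lemma rhoP_le_q (u v : X) {t : ℝ} (ht : 0 < t) : rhoP u v ≤ myq u v t := by
  refine le_of_tendsto (tendsto_rhoP u v) ?_
  filter_upwards [Ioo_mem_nhdsGT_of_mem (by constructor <;> simp [ht] : (0:ℝ) ∈ Ico 0 t)]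
    with s hs
  exact q_mono u v (ne_of_gt hs.1) (ne_of_gt ht) hs.2.le

lemma q_le_rhoM (u v : X) {t : ℝ} (ht : t < 0) : myq u v t ≤ rhoM u v := by
  refine ge_of_tendsto (tendsto_rhoM u v) ?_
  filter_upwards [Ioo_mem_nhdsLT_of_mem (by constructor <;> simp [ht] : (0:ℝ) ∈ Ioc t 0)]
    with s hs
  exact q_mono u v (ne_of_lt ht) (ne_of_lt hs.2) hs.1.le

lemma rhoM_le_rhoP (u v : X) : rhoM u v ≤ rhoP u v := by
  have h1 : ∀ t : ℝ, 0 < t → rhoM u v ≤ myq u v t := by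
    intro t ht
    refine le_of_tendsto (tendsto_rhoM u v) ?_
    filter_upwards [self_mem_nhdsWithin] with s hs
    exact q_mono u v (ne_of_lt hs) (ne_of_gt ht) (le_of_lt (hs.trans ht))
  refine ge_of_tendsto (tendsto_rhoP u v) ?_
  filter_upwards [self_mem_nhdsWithin] with s hs
  exact h1 s hs

lemma birkhoff_iff (u v : X) :
    (∀ t : ℝ, ‖u + t • v‖ ≥ ‖u‖) ↔ (rhoM u v ≤ 0 ∧ 0 ≤ rhoP u v) := by
  constructor
  · intro h
    constructor
    · refine le_of_tendsto (tendsto_rhoM u v) ?_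
      filter_upwards [self_mem_nhdsWithin] with t ht
      have hn : ‖u‖^2 ≤ ‖u + t • v‖^2 := pow_le_pow_left₀ (norm_nonneg _) (h t) 2
      have ht' : (t : ℝ) < 0 := ht
      exact div_nonpos_of_nonneg_of_nonpos (by linarith) (by linarith)
    · refine ge_of_tendsto (tendsto_rhoP u v) ?_
      filter_upwards [self_mem_nhdsWithin] with t ht
      have hn : ‖u‖^2 ≤ ‖u + t • v‖^2 := pow_le_pow_left₀ (norm_nonneg _) (h t) 2
      have ht' : (0 : ℝ) < t := ht
      exact div_nonneg (by linarith) (by linarith)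
  · rintro ⟨h1, h2⟩ t
    rcases lt_trichotomy t 0 with ht | rfl | ht
    · have hq : myq u v t ≤ 0 := (q_le_rhoM u v ht).trans h1
      have hd : 2 * t < 0 := by linarith
      have : 0 ≤ ‖u + t • v‖^2 - ‖u‖^2 := by
        rcases div_nonpos_iff.mp hq with ⟨h, _⟩ | ⟨_, h⟩
        · exact h
        · linarith
      exact le_of_pow_le_pow_left₀ two_ne_zero (norm_nonneg _) (by linarith)
    · simp
    · have hq : 0 ≤ myq u v t := le_trans h2 (rhoP_le_q u v ht)
      have hd : 0 < 2 * t := by linarith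
      have : 0 ≤ ‖u + t • v‖^2 - ‖u‖^2 := by
        rcases div_nonneg_iff.mp hq with ⟨h, _⟩ | ⟨_, h⟩
        · exact h
        · linarith
      exact le_of_pow_le_pow_left₀ two_ne_zero (norm_nonneg _) (by linarith)

lemma key_identity (u v : X) (c : ℝ) {t : ℝ} (ht : t ≠ 0) (hpos : 0 < 1 + t * c) :
    myq u (c • u + v) t = (1 + t * c) * myq u v (t / (1 + t * c))
      + (c + t * c ^ 2 / 2) * ‖u‖ ^ 2 := by
  have h1 : u + t • (c • u + v) = (1 + t * c) • (u + (t / (1 + t * c)) • v) := by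
    have hs : (1 + t * c) * (t / (1 + t * c)) = t := by field_simp
    rw [smul_add, smul_smul, smul_add, smul_smul, hs]
    module
  unfold myq
  rw [h1, norm_smul, mul_pow, Real.norm_eq_abs, abs_of_pos hpos]
  generalize ‖u + (t / (1 + t * c)) • v‖ ^ 2 = A
  field_simp
  ring

lemma aux_ev (c : ℝ) : ∀ᶠ t in 𝓝 (0 : ℝ), 0 < 1 + t * c := by
  have h0 : Tendsto (fun t : ℝ => 1 + t * c) (𝓝 0) (𝓝 1) := by
    have hc : Continuous fun t : ℝ => 1 + t * c := by continuity
    simpa using hc.tendsto 0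
  exact h0.eventually (eventually_gt_nhds one_pos)

lemma rhoP_translate (u v : X) (c : ℝ) :
    rhoP u (c • u + v) = c * ‖u‖ ^ 2 + rhoP u v := by
  have hev : ∀ᶠ t in 𝓝[>] (0:ℝ), 0 < 1 + t * c :=
    eventually_nhdsWithin_of_eventually_nhds (aux_ev c)
  have hst : Tendsto (fun t : ℝ => t / (1 + t * c)) (𝓝[>] 0) (𝓝[>] 0) := by
    rw [tendsto_nhdsWithin_iff]
    constructor
    · have hc : ContinuousAt (fun t : ℝ => t / (1 + t * c)) 0 := by
        apply ContinuousAt.div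
        · exact continuousAt_id
        · fun_prop
        · norm_num
      simpa using hc.tendsto.mono_left nhdsWithin_le_nhds
    · filter_upwards [hev, self_mem_nhdsWithin] with t h1 h2
      exact div_pos h2 h1
  have hlin : Tendsto (fun t : ℝ => (c + t * c ^ 2 / 2) * ‖u‖ ^ 2) (𝓝[>] (0:ℝ))
      (𝓝 (c * ‖u‖ ^ 2)) := by
    have hc : Continuous fun t : ℝ => (c + t * c ^ 2 / 2) * ‖u‖ ^ 2 := by continuity
    simpa using (hc.tendsto 0).mono_left nhdsWithin_le_nhds
  have hmul : Tendsto (fun t : ℝ => (1 + t * c) * myq u v (t / (1 + t * c))) (𝓝[>] (0:ℝ))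
      (𝓝 (1 * rhoP u v)) := by
    apply Tendsto.mul
    · have hc : Continuous fun t : ℝ => 1 + t * c := by continuity
      have := hc.tendsto 0
      simp only [zero_mul, add_zero] at this
      exact this.mono_left nhdsWithin_le_nhds
    · exact (tendsto_rhoP u v).comp hst
  have hfull := hmul.add hlin
  have heq : (fun t : ℝ => (1 + t * c) * myq u v (t / (1 + t * c))
      + (c + t * c ^ 2 / 2) * ‖u‖ ^ 2) =ᶠ[𝓝[>] (0:ℝ)] myq u (c • u + v) := by
    filter_upwards [hev, self_mem_nhdsWithin] with t h1 h2
    exact (key_identity u v c (ne_of_gt h2) h1).symm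
  have hT : Tendsto (myq u (c • u + v)) (𝓝[>] (0:ℝ)) (𝓝 (1 * rhoP u v + c * ‖u‖ ^ 2)) :=
    hfull.congr' heq
  have : rhoP u (c • u + v) = 1 * rhoP u v + c * ‖u‖ ^ 2 := hT.limUnder_eq
  rw [this]; ring

lemma rhoM_translate (u v : X) (c : ℝ) :
    rhoM u (c • u + v) = c * ‖u‖ ^ 2 + rhoM u v := by
  have hev : ∀ᶠ t in 𝓝[<] (0:ℝ), 0 < 1 + t * c :=
    eventually_nhdsWithin_of_eventually_nhds (aux_ev c)
  have hst : Tendsto (fun t : ℝ => t / (1 + t * c)) (𝓝[<] 0) (𝓝[<] 0) := by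
    rw [tendsto_nhdsWithin_iff]
    constructor
    · have hc : ContinuousAt (fun t : ℝ => t / (1 + t * c)) 0 := by
        apply ContinuousAt.div
        · exact continuousAt_id
        · fun_prop
        · norm_num
      simpa using hc.tendsto.mono_left nhdsWithin_le_nhds
    · filter_upwards [hev, self_mem_nhdsWithin] with t h1 h2
      exact div_neg_of_neg_of_pos h2 h1
  have hlin : Tendsto (fun t : ℝ => (c + t * c ^ 2 / 2) * ‖u‖ ^ 2) (𝓝[<] (0:ℝ))
      (𝓝 (c * ‖u‖ ^ 2)) := by
    have hc : Continuous fun t : ℝ => (c + t * c ^ 2 / 2) * ‖u‖ ^ 2 := by continuity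
    simpa using (hc.tendsto 0).mono_left nhdsWithin_le_nhds
  have hmul : Tendsto (fun t : ℝ => (1 + t * c) * myq u v (t / (1 + t * c))) (𝓝[<] (0:ℝ))
      (𝓝 (1 * rhoM u v)) := by
    apply Tendsto.mul
    · have hc : Continuous fun t : ℝ => 1 + t * c := by continuity
      have := hc.tendsto 0
      simp only [zero_mul, add_zero] at this
      exact this.mono_left nhdsWithin_le_nhds
    · exact (tendsto_rhoM u v).comp hst
  have hfull := hmul.add hlin
  have heq : (fun t : ℝ => (1 + t * c) * myq u v (t / (1 + t * c))
      + (c + t * c ^ 2 / 2) * ‖u‖ ^ 2) =ᶠ[𝓝[<] (0:ℝ)] myq u (c • u + v) := by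
    filter_upwards [hev, self_mem_nhdsWithin] with t h1 h2
    exact (key_identity u v c (ne_of_lt h2) h1).symm
  have hT : Tendsto (myq u (c • u + v)) (𝓝[<] (0:ℝ)) (𝓝 (1 * rhoM u v + c * ‖u‖ ^ 2)) :=
    hfull.congr' heq
  have : rhoM u (c • u + v) = 1 * rhoM u v + c * ‖u‖ ^ 2 := hT.limUnder_eq
  rw [this]; ring

lemma rho_zero (v : X) : rhoM (0:X) v = rhoP (0:X) v := by
  have hq : ∀ t : ℝ, t ≠ 0 → myq (0:X) v t = t * ‖v‖^2 / 2 := by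
    intro t ht
    unfold myq
    rw [zero_add, norm_smul, mul_pow, Real.norm_eq_abs, sq_abs, norm_zero]
    field_simp
    ring
  have hc : Tendsto (fun t : ℝ => t * ‖v‖^2 / 2) (𝓝 0) (𝓝 0) := by
    have : Continuous fun t : ℝ => t * ‖v‖^2 / 2 := by continuity
    simpa using this.tendsto 0
  have hP : Tendsto (myq (0:X) v) (𝓝[>] (0:ℝ)) (𝓝 0) := by
    refine (hc.mono_left nhdsWithin_le_nhds).congr' ?_
    filter_upwards [self_mem_nhdsWithin] with t ht
    exact (hq t (ne_of_gt ht)).symm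
  have hM : Tendsto (myq (0:X) v) (𝓝[<] (0:ℝ)) (𝓝 0) := by
    refine (hc.mono_left nhdsWithin_le_nhds).congr' ?_
    filter_upwards [self_mem_nhdsWithin] with t ht
    exact (hq t (ne_of_lt ht)).symm
  have e1 : rhoM (0:X) v = 0 := hM.limUnder_eq
  have e2 : rhoP (0:X) v = 0 := hP.limUnder_eq
  rw [e1, e2]

end Aux

theorem stmt_8 {X : Type*} [NormedAddCommGroup X] [NormedSpace ℝ X]
    (α β : ℝ) (hα : α ∈ Set.Ico (0:ℝ) 1) (hβ : β ∈ Set.Ico (0:ℝ) 1)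
    (hne : α ≠ β) (hab : 0 < α + β) (hab1 : α + β < 1) :
    (∀ u v : X, (∀ t : ℝ, ‖u + t • v‖ ≥ ‖u‖) ↔ rhoAB α β u v = 0) ↔
    (∀ u v : X, rhoM u v = rhoP u v) := by
  constructor
  · intro h u v
    by_cases hu : u = 0
    · subst hu; exact rho_zero v
    · have hN : (0:ℝ) < ‖u‖^2 := pow_pos (norm_pos_iff.mpr hu) 2
      set s1 : ℝ := -(rhoP u v) / ‖u‖^2 with hs1
      set s2 : ℝ := -(rhoM u v) / ‖u‖^2 with hs2
      have hs1N : s1 * ‖u‖^2 = -(rhoP u v) := by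
        rw [hs1]; field_simp
      have hs2N : s2 * ‖u‖^2 = -(rhoM u v) := by
        rw [hs2]; field_simp
      have hMP := rhoM_le_rhoP u v
      have hb1 : ∀ t : ℝ, ‖u + t • (s1 • u + v)‖ ≥ ‖u‖ := by
        rw [birkhoff_iff, rhoM_translate, rhoP_translate]
        constructor <;> [skip; skip] <;> rw [show s1 * ‖u‖^2 = -(rhoP u v) from hs1N] <;> linarith
      have hb2 : ∀ t : ℝ, ‖u + t • (s2 • u + v)‖ ≥ ‖u‖ := by
        rw [birkhoff_iff, rhoM_translate, rhoP_translate]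
        constructor <;> rw [show s2 * ‖u‖^2 = -(rhoM u v) from hs2N] <;> linarith
      have e1 := (h u (s1 • u + v)).mp hb1
      have e2 := (h u (s2 • u + v)).mp hb2
      unfold rhoAB at e1 e2
      rw [rhoM_translate, rhoP_translate, hs1N] at e1
      rw [rhoM_translate, rhoP_translate, hs2N] at e2
      have hD : (α + β) * (rhoP u v - rhoM u v) = 0 := by
        linear_combination (-1 : ℝ) * e1 + e2
      rcases mul_eq_zero.mp hD with hz | hz
      · exact absurd hz (ne_of_gt hab)
      · linarith
  · intro h u v
    have hr := h u v
    rw [birkhoff_iff]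
    unfold rhoAB
    constructor
    · rintro ⟨h1, h2⟩
      have hP0 : rhoP u v = 0 := le_antisymm (hr ▸ h1) h2
      rw [hr, hP0]; ring
    · intro h0
      rw [hr] at h0
      have hDD : (α + β) * rhoP u v = 0 := by linear_combination h0
      rcases mul_eq_zero.mp hDD with hz | hz
      · exact absurd hz (ne_of_gt hab)
      · exact ⟨by rw [hr, hz], by rw [hz]⟩
end

section
/- Let X be a real normed linear space and α, β ∈ [0,1) with 0 < α+β < 1. Then ρ_{α,β}(u,v) = ρ_{α,β}(v,u) for all u, v ∈ X if and only if the norm of X arises from an inner product. -/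
open Set Filter Topology

section SlopeConvex
variable {f : ℝ → ℝ}

lemma slopeMono (hf : ConvexOn ℝ univ f) (a : ℝ) : MonotoneOn (slope f a) {a}ᶜ := by
  intro x hx y hy hxy
  rw [slope_def_field, slope_def_field]
  exact hf.secant_mono (mem_univ a) (mem_univ x) (mem_univ y) hx hy hxy

noncomputable def rder (f : ℝ → ℝ) (a : ℝ) : ℝ := sInf (slope f a '' Ioi a)
noncomputable def lder (f : ℝ → ℝ) (a : ℝ) : ℝ := sSup (slope f a '' Iio a)

lemma bddBelow_slope (hf : ConvexOn ℝ univ f) (a : ℝ) : BddBelow (slope f a '' Ioi a) := by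
  refine ⟨slope f a (a-1), ?_⟩
  rintro y ⟨t, ht, rfl⟩
  exact slopeMono hf a (by simp : (a-1) ∈ ({a}ᶜ : Set ℝ)) (ne_of_gt ht) (by linarith [mem_Ioi.1 ht])

lemma bddAbove_slope (hf : ConvexOn ℝ univ f) (a : ℝ) : BddAbove (slope f a '' Iio a) := by
  refine ⟨slope f a (a+1), ?_⟩
  rintro y ⟨t, ht, rfl⟩
  exact slopeMono hf a (ne_of_lt ht) (by simp : (a+1) ∈ ({a}ᶜ : Set ℝ)) (by linarith [mem_Iio.1 ht])

lemma tendsto_rder (hf : ConvexOn ℝ univ f) (a : ℝ) :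
    Tendsto (slope f a) (𝓝[>] a) (𝓝 (rder f a)) :=
  MonotoneOn.tendsto_nhdsGT ((slopeMono hf a).mono (fun _ hx => ne_of_gt hx))
    (bddBelow_slope hf a)

lemma tendsto_lder (hf : ConvexOn ℝ univ f) (a : ℝ) :
    Tendsto (slope f a) (𝓝[<] a) (𝓝 (lder f a)) :=
  MonotoneOn.tendsto_nhdsLT ((slopeMono hf a).mono (fun _ hx => ne_of_lt hx))
    (bddAbove_slope hf a)

lemma rder_le_slope (hf : ConvexOn ℝ univ f) {a t : ℝ} (h : a < t) : rder f a ≤ slope f a t :=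
  csInf_le (bddBelow_slope hf a) ⟨t, h, rfl⟩

lemma slope_le_lder (hf : ConvexOn ℝ univ f) {a t : ℝ} (h : t < a) : slope f a t ≤ lder f a :=
  le_csSup (bddAbove_slope hf a) ⟨t, h, rfl⟩

lemma lder_le_rder (hf : ConvexOn ℝ univ f) (a : ℝ) : lder f a ≤ rder f a := by
  refine csSup_le ⟨slope f a (a-1), ⟨a-1, by simp, rfl⟩⟩ ?_
  rintro x ⟨s, hs, rfl⟩
  refine le_csInf ⟨slope f a (a+1), ⟨a+1, by simp, rfl⟩⟩ ?_
  rintro y ⟨t, ht, rfl⟩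
  exact slopeMono hf a (ne_of_lt hs) (ne_of_gt ht) (le_of_lt ((mem_Iio.1 hs).trans (mem_Ioi.1 ht)))

lemma rder_le_lder_of_lt (hf : ConvexOn ℝ univ f) {a b : ℝ} (h : a < b) :
    rder f a ≤ lder f b := by
  have h1 : rder f a ≤ slope f a b := rder_le_slope hf h
  have h2 : slope f b a ≤ lder f b := slope_le_lder hf h
  rw [slope_comm] at h1
  exact h1.trans h2

end SlopeConvex

section Phi
variable {X : Type*} [NormedAddCommGroup X] [NormedSpace ℝ X]

lemma phi_convex (u v : X) : ConvexOn ℝ univ (fun t : ℝ => ‖u + t • v‖ ^ 2 / 2) := by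
  have h1 : ConvexOn ℝ univ (fun t : ℝ => ‖u + t • v‖) := by
    refine ⟨convex_univ, fun s _ t _ a b ha hb hab => ?_⟩
    simp only [smul_eq_mul]
    have hv : u + (a * s + b * t) • v = a • (u + s • v) + b • (u + t • v) := by
      have : a • (u + s • v) + b • (u + t • v) = (a + b) • u + (a * s + b * t) • v := by
        module
      rw [this, hab, one_smul]
    rw [hv]
    calc ‖a • (u + s • v) + b • (u + t • v)‖ ≤ ‖a • (u + s • v)‖ + ‖b • (u + t • v)‖ :=
          norm_add_le _ _
      _ = a * ‖u + s • v‖ + b * ‖u + t • v‖ := by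
          rw [norm_smul, norm_smul, Real.norm_of_nonneg ha, Real.norm_of_nonneg hb]
  have h2 := h1.pow (n := 2) (fun x _ => norm_nonneg _)
  have h3 := h2.smul (c := (2:ℝ)⁻¹) (by norm_num)
  have heq : (fun t : ℝ => ‖u + t • v‖ ^ 2 / 2) = (2:ℝ)⁻¹ • ((fun t : ℝ => ‖u + t • v‖) ^ 2) := by
    funext t
    simp [Pi.smul_apply, Pi.pow_apply]
    ring
  rw [heq]
  exact h3

lemma slope_phi_eq (u v : X) (t : ℝ) :
    slope (fun t : ℝ => ‖u + t • v‖ ^ 2 / 2) 0 t = (‖u + t • v‖^2 - ‖u‖^2) / (2*t) := by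
  rw [slope_def_field]
  simp only [zero_smul, add_zero, sub_zero]
  ring

lemma tendsto_rhoP_s12 (u v : X) :
    Tendsto (fun t : ℝ => (‖u + t • v‖^2 - ‖u‖^2) / (2*t)) (𝓝[>] (0:ℝ))
      (𝓝 (rhoP u v)) := by
  have h := tendsto_rder (phi_convex u v) 0
  have heq : (fun t : ℝ => (‖u + t • v‖^2 - ‖u‖^2) / (2*t))
      = slope (fun t : ℝ => ‖u + t • v‖ ^ 2 / 2) 0 := by
    funext t; exact (slope_phi_eq u v t).symm
  rw [heq]
  have : rhoP u v = rder (fun t : ℝ => ‖u + t • v‖ ^ 2 / 2) 0 := by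
    rw [rhoP, heq]
    exact h.limUnder_eq
  rw [this]
  exact h

lemma tendsto_rhoM_s12 (u v : X) :
    Tendsto (fun t : ℝ => (‖u + t • v‖^2 - ‖u‖^2) / (2*t)) (𝓝[<] (0:ℝ))
      (𝓝 (rhoM u v)) := by
  have h := tendsto_lder (phi_convex u v) 0
  have heq : (fun t : ℝ => (‖u + t • v‖^2 - ‖u‖^2) / (2*t))
      = slope (fun t : ℝ => ‖u + t • v‖ ^ 2 / 2) 0 := by
    funext t; exact (slope_phi_eq u v t).symm
  rw [heq]
  have : rhoM u v = lder (fun t : ℝ => ‖u + t • v‖ ^ 2 / 2) 0 := by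
    rw [rhoM, heq]
    exact h.limUnder_eq
  rw [this]
  exact h

-- shift in the first argument along v
lemma rhoP_shift (u v : X) (s : ℝ) :
    rhoP (u + s • v) v = rder (fun t : ℝ => ‖u + t • v‖ ^ 2 / 2) s := by
  have h := tendsto_rder (phi_convex u v) s
  have hmap : Tendsto (fun r : ℝ => s + r) (𝓝[>] (0:ℝ)) (𝓝[>] s) := by
    rw [tendsto_nhdsWithin_iff]
    constructor
    · have : Tendsto (fun r : ℝ => s + r) (𝓝 (0:ℝ)) (𝓝 s) := by
        simpa using (tendsto_const_nhds.add tendsto_id : Tendsto (fun r : ℝ => s + r) (𝓝 0) (𝓝 (s + 0)))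
      exact this.mono_left nhdsWithin_le_nhds
    · filter_upwards [self_mem_nhdsWithin] with r hr
      exact lt_add_of_pos_right s hr
  have h2 := h.comp hmap
  have heq : (fun r : ℝ => (‖(u + s • v) + r • v‖^2 - ‖u + s • v‖^2) / (2*r))
      = (slope (fun t : ℝ => ‖u + t • v‖ ^ 2 / 2) s) ∘ (fun r : ℝ => s + r) := by
    funext r
    simp only [Function.comp_apply, slope_def_field, add_sub_cancel_left]
    have hv : u + (s + r) • v = (u + s • v) + r • v := by module
    rw [hv]
    ring
  rw [rhoP, heq]
  exact h2.limUnder_eq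

lemma rhoM_shift (u v : X) (s : ℝ) :
    rhoM (u + s • v) v = lder (fun t : ℝ => ‖u + t • v‖ ^ 2 / 2) s := by
  have h := tendsto_lder (phi_convex u v) s
  have hmap : Tendsto (fun r : ℝ => s + r) (𝓝[<] (0:ℝ)) (𝓝[<] s) := by
    rw [tendsto_nhdsWithin_iff]
    constructor
    · have : Tendsto (fun r : ℝ => s + r) (𝓝 (0:ℝ)) (𝓝 s) := by
        simpa using (tendsto_const_nhds.add tendsto_id : Tendsto (fun r : ℝ => s + r) (𝓝 0) (𝓝 (s + 0)))
      exact this.mono_left nhdsWithin_le_nhds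
    · filter_upwards [self_mem_nhdsWithin] with r hr
      exact add_lt_of_neg_right s hr
  have h2 := h.comp hmap
  have heq : (fun r : ℝ => (‖(u + s • v) + r • v‖^2 - ‖u + s • v‖^2) / (2*r))
      = (slope (fun t : ℝ => ‖u + t • v‖ ^ 2 / 2) s) ∘ (fun r : ℝ => s + r) := by
    funext r
    simp only [Function.comp_apply, slope_def_field, add_sub_cancel_left]
    have hv : u + (s + r) • v = (u + s • v) + r • v := by module
    rw [hv]
    ring
  rw [rhoM, heq]
  exact h2.limUnder_eq

end Phi

section Shift
variable {X : Type*} [NormedAddCommGroup X] [NormedSpace ℝ X]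

lemma shift_second_core (v u : X) (s : ℝ) (l : Filter ℝ) (hl : l ≤ 𝓝 (0:ℝ)) (c : ℝ)
    (ht0 : ∀ᶠ t in l, t ≠ 0)
    (hσ : Tendsto (fun t : ℝ => t / (1 + t * s)) l l)
    (hbase : Tendsto (fun t : ℝ => (‖v + t • u‖^2 - ‖v‖^2) / (2*t)) l (𝓝 c)) :
    Tendsto (fun t : ℝ => (‖v + t • (u + s • v)‖^2 - ‖v‖^2) / (2*t)) l
      (𝓝 (c + s * ‖v‖^2)) := by
  have hden : Tendsto (fun t : ℝ => 1 + t * s) l (𝓝 1) := by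
    have : Tendsto (fun t : ℝ => 1 + t * s) (𝓝 (0:ℝ)) (𝓝 (1 + 0 * s)) :=
      (tendsto_const_nhds.add (tendsto_id.mul tendsto_const_nhds))
    simpa using this.mono_left hl
  have hdne : ∀ᶠ t in l, 1 + t * s ≠ 0 :=
    hden.eventually (compl_singleton_mem_nhds (by norm_num))
  have hcomp := hbase.comp hσ
  have hG : Tendsto (fun t : ℝ =>
      (1 + t * s) * ((‖v + (t / (1 + t * s)) • u‖^2 - ‖v‖^2) / (2 * (t / (1 + t * s))))
      + (s + t * s^2 / 2) * ‖v‖^2) l (𝓝 (1 * c + (s + 0 * s^2 / 2) * ‖v‖^2)) := by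
    refine (hden.mul hcomp).add ?_
    have h0 : Tendsto (fun t : ℝ => (s + t * s^2 / 2) * ‖v‖^2) (𝓝 (0:ℝ))
        (𝓝 ((s + 0 * s^2 / 2) * ‖v‖^2)) := by
      apply Continuous.tendsto
      continuity
    exact h0.mono_left hl
  have heq : (fun t : ℝ => (‖v + t • (u + s • v)‖^2 - ‖v‖^2) / (2*t)) =ᶠ[l]
      (fun t : ℝ =>
      (1 + t * s) * ((‖v + (t / (1 + t * s)) • u‖^2 - ‖v‖^2) / (2 * (t / (1 + t * s))))
      + (s + t * s^2 / 2) * ‖v‖^2) := by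
    filter_upwards [ht0, hdne] with t ht hd
    have hv : v + t • (u + s • v) = (1 + t * s) • (v + (t / (1 + t * s)) • u) := by
      have hsc : (1 + t * s) * (t / (1 + t * s)) = t := by field_simp
      conv_rhs => rw [smul_add, smul_smul, hsc]
      module
    have hn : ‖v + t • (u + s • v)‖^2 = (1 + t * s)^2 * ‖v + (t / (1 + t * s)) • u‖^2 := by
      rw [hv, norm_smul, Real.norm_eq_abs, mul_pow, sq_abs]
    rw [hn]
    field_simp
    ring
  have := hG.congr' heq.symm
  simpa using this

lemma rhoP_second_shift (v u : X) (s : ℝ) :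
    rhoP v (u + s • v) = rhoP v u + s * ‖v‖^2 := by
  have hσ : Tendsto (fun t : ℝ => t / (1 + t * s)) (𝓝[>] (0:ℝ)) (𝓝[>] (0:ℝ)) := by
    rw [tendsto_nhdsWithin_iff]
    have hden : Tendsto (fun t : ℝ => 1 + t * s) (𝓝[>] (0:ℝ)) (𝓝 1) := by
      have : Tendsto (fun t : ℝ => 1 + t * s) (𝓝 (0:ℝ)) (𝓝 (1 + 0 * s)) :=
        (tendsto_const_nhds.add (tendsto_id.mul tendsto_const_nhds))
      simpa using this.mono_left nhdsWithin_le_nhds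
    constructor
    · have h0 : Tendsto (fun t : ℝ => t / (1 + t * s)) (𝓝 (0:ℝ)) (𝓝 (0 / (1 + 0 * s))) :=
        tendsto_id.div (tendsto_const_nhds.add (tendsto_id.mul tendsto_const_nhds)) (by norm_num)
      simpa using h0.mono_left nhdsWithin_le_nhds
    · filter_upwards [self_mem_nhdsWithin, hden.eventually (Ioi_mem_nhds one_pos)] with t ht hd
      exact div_pos ht hd
  have h := shift_second_core v u s (𝓝[>] (0:ℝ)) nhdsWithin_le_nhds (rhoP v u)
    (by filter_upwards [self_mem_nhdsWithin] with t ht using ne_of_gt ht)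
    hσ (tendsto_rhoP_s12 v u)
  rw [rhoP]
  exact h.limUnder_eq

lemma rhoM_second_shift (v u : X) (s : ℝ) :
    rhoM v (u + s • v) = rhoM v u + s * ‖v‖^2 := by
  have hσ : Tendsto (fun t : ℝ => t / (1 + t * s)) (𝓝[<] (0:ℝ)) (𝓝[<] (0:ℝ)) := by
    rw [tendsto_nhdsWithin_iff]
    have hden : Tendsto (fun t : ℝ => 1 + t * s) (𝓝[<] (0:ℝ)) (𝓝 1) := by
      have : Tendsto (fun t : ℝ => 1 + t * s) (𝓝 (0:ℝ)) (𝓝 (1 + 0 * s)) :=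
        (tendsto_const_nhds.add (tendsto_id.mul tendsto_const_nhds))
      simpa using this.mono_left nhdsWithin_le_nhds
    constructor
    · have h0 : Tendsto (fun t : ℝ => t / (1 + t * s)) (𝓝 (0:ℝ)) (𝓝 (0 / (1 + 0 * s))) :=
        tendsto_id.div (tendsto_const_nhds.add (tendsto_id.mul tendsto_const_nhds)) (by norm_num)
      simpa using h0.mono_left nhdsWithin_le_nhds
    · filter_upwards [self_mem_nhdsWithin, hden.eventually (Ioi_mem_nhds one_pos)] with t ht hd
      exact div_neg_of_neg_of_pos ht hd
  have h := shift_second_core v u s (𝓝[<] (0:ℝ)) nhdsWithin_le_nhds (rhoM v u)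
    (by filter_upwards [self_mem_nhdsWithin] with t ht using ne_of_lt ht)
    hσ (tendsto_rhoM_s12 v u)
  rw [rhoM]
  exact h.limUnder_eq

end Shift

section Main
variable {X : Type*} [NormedAddCommGroup X] [NormedSpace ℝ X]

lemma parallelogram_of_sym {α β : ℝ} (hα0 : 0 ≤ α) (hβ0 : 0 ≤ β) (hab : 0 < α + β)
    (hsym : ∀ u v : X, rhoAB α β u v = rhoAB α β v u) (u v : X) :
    ‖u + v‖^2 + ‖u - v‖^2 = 2*‖u‖^2 + 2*‖v‖^2 := by
  set f : ℝ → ℝ := fun t : ℝ => ‖u + t • v‖ ^ 2 / 2 with hfdef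
  have hf : ConvexOn ℝ univ f := phi_convex u v
  set c : ℝ := rhoAB α β v u with hcdef
  set k : ℝ := (α + β) * ‖v‖^2 with hkdef
  have key : ∀ s : ℝ, α * lder f s + β * rder f s = c + k * s := by
    intro s
    have h := hsym (u + s • v) v
    rw [rhoAB, rhoAB, rhoM_shift, rhoP_shift, rhoM_second_shift, rhoP_second_shift] at h
    rw [h, hcdef, hkdef, rhoAB]
    ring
  have step1 : ∀ s : ℝ, c + k * s ≤ (α + β) * lder f s := by
    intro s
    have hmono : ∀ᶠ r in 𝓝[<] s, c + k * r ≤ (α + β) * lder f s := by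
      filter_upwards [self_mem_nhdsWithin] with r hr
      have h1 : lder f r ≤ rder f r := lder_le_rder hf r
      have h2 : rder f r ≤ lder f s := rder_le_lder_of_lt hf hr
      have h3 : lder f r ≤ lder f s := h1.trans h2
      calc c + k * r = α * lder f r + β * rder f r := (key r).symm
        _ ≤ α * lder f s + β * lder f s := by nlinarith
        _ = (α + β) * lder f s := by ring
    have htd : Tendsto (fun r : ℝ => c + k * r) (𝓝[<] s) (𝓝 (c + k * s)) := by
      have : Continuous (fun r : ℝ => c + k * r) := by continuity
      exact (this.tendsto s).mono_left nhdsWithin_le_nhds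
    exact le_of_tendsto htd hmono
  have step2 : ∀ s : ℝ, (α + β) * rder f s ≤ c + k * s := by
    intro s
    have hmono : ∀ᶠ r in 𝓝[>] s, (α + β) * rder f s ≤ c + k * r := by
      filter_upwards [self_mem_nhdsWithin] with r hr
      have h1 : lder f r ≤ rder f r := lder_le_rder hf r
      have h2 : rder f s ≤ lder f r := rder_le_lder_of_lt hf hr
      have h3 : rder f s ≤ rder f r := h2.trans h1
      calc (α + β) * rder f s = α * rder f s + β * rder f s := by ring
        _ ≤ α * lder f r + β * rder f r := by nlinarith
        _ = c + k * r := key r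
    have htd : Tendsto (fun r : ℝ => c + k * r) (𝓝[>] s) (𝓝 (c + k * s)) := by
      have : Continuous (fun r : ℝ => c + k * r) := by continuity
      exact (this.tendsto s).mono_left nhdsWithin_le_nhds
    exact ge_of_tendsto htd hmono
  have heq : ∀ s : ℝ, rder f s = (c + k * s) / (α + β) ∧ lder f s = (c + k * s) / (α + β) := by
    intro s
    have h1 := step1 s
    have h2 := step2 s
    have h3 : lder f s ≤ rder f s := lder_le_rder hf s
    have h4 : (α + β) * lder f s ≤ (α + β) * rder f s := by nlinarith
    have h5 : (α + β) * rder f s = c + k * s := le_antisymm h2 (h1.trans h4)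
    have h6 : (α + β) * lder f s = c + k * s := le_antisymm (h4.trans h2) h1
    constructor
    · field_simp [hab.ne']
      linarith [h5]
    · field_simp [hab.ne']
      linarith [h6]
  have hderiv : ∀ s : ℝ, HasDerivAt f ((c + k * s) / (α + β)) s := by
    intro s
    rw [hasDerivAt_iff_tendsto_slope]
    have hsplit : (𝓝[≠] s) = (𝓝[<] s) ⊔ (𝓝[>] s) := by
      rw [← nhdsWithin_union, Iio_union_Ioi]
    rw [hsplit, tendsto_sup]
    constructor
    · have := tendsto_lder hf s
      rwa [(heq s).2] at this
    · have := tendsto_rder hf s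
      rwa [(heq s).1] at this
  have hquad : ∀ s : ℝ, f s = f 0 + (c / (α + β)) * s + (k / (α + β)) * s^2 / 2 := by
    intro s
    set g : ℝ → ℝ := fun s => f s - ((c / (α + β)) * s + (k / (α + β)) * s^2 / 2) with hgdef
    have hg : ∀ x : ℝ, HasDerivAt g 0 x := by
      intro x
      have hpoly : HasDerivAt (fun s : ℝ => (c / (α + β)) * s + (k / (α + β)) * s^2 / 2)
          ((c + k * x) / (α + β)) x := by
        have h1 : HasDerivAt (fun s : ℝ => (c / (α + β)) * s) (c / (α + β)) x := by
          simpa using (hasDerivAt_id x).const_mul (c / (α + β))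
        have h2 : HasDerivAt (fun s : ℝ => (k / (α + β)) * s^2 / 2)
            ((k / (α + β)) * (2 * x) / 2) x := by
          exact (((hasDerivAt_pow 2 x).const_mul (k / (α + β))).div_const 2).congr_deriv (by
            push_cast; ring)
        have := h1.add h2
        exact this.congr_deriv (by ring)
      have := (hderiv x).sub hpoly
      rw [sub_self] at this
      exact this
    have hconst : g s = g 0 :=
      is_const_of_deriv_eq_zero (fun x => (hg x).differentiableAt)
        (fun x => (hg x).deriv) s 0
    have : f s - ((c / (α + β)) * s + (k / (α + β)) * s^2 / 2) = f 0 - 0 := by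
      simpa [hgdef] using hconst
    linarith
  have h1 := hquad 1
  have h2 := hquad (-1)
  have hk : k / (α + β) = ‖v‖^2 := by
    rw [hkdef]; field_simp
  have hf1 : f 1 = ‖u + v‖^2 / 2 := by simp [hfdef]
  have hfm1 : f (-1) = ‖u - v‖^2 / 2 := by
    have h : u + (-1 : ℝ) • v = u - v := by module
    show ‖u + (-1 : ℝ) • v‖ ^ 2 / 2 = _
    rw [h]
  have hf0 : f 0 = ‖u‖^2 / 2 := by simp [hfdef]
  rw [hf1, hf0, hk] at h1
  rw [hfm1, hf0, hk] at h2
  nlinarith [h1, h2]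

end Main

theorem stmt_12 {X : Type*} [NormedAddCommGroup X] [NormedSpace ℝ X]
    (α β : ℝ) (hα : α ∈ Set.Ico (0:ℝ) 1) (hβ : β ∈ Set.Ico (0:ℝ) 1)
    (hab : 0 < α + β) (hab1 : α + β < 1) :
    (∀ u v : X, rhoAB α β u v = rhoAB α β v u) ↔
    (∃ f : X →ₗ[ℝ] X →ₗ[ℝ] ℝ, (∀ u v : X, f u v = f v u) ∧ ∀ u : X, f u u = ‖u‖^2) := by
  constructor
  · intro hsym
    have par : ∀ x y : X, ‖x + y‖ * ‖x + y‖ + ‖x - y‖ * ‖x - y‖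
        = 2 * (‖x‖ * ‖x‖ + ‖y‖ * ‖y‖) := by
      intro x y
      have h := parallelogram_of_sym hα.1 hβ.1 hab hsym x y
      nlinarith [h, sq_nonneg (‖x+y‖), sq_abs (‖x+y‖)]
    letI : InnerProductSpace ℝ X := InnerProductSpace.ofNorm ℝ par
    refine ⟨innerₗ X, fun u v => ?_, fun u => ?_⟩
    · simp only [innerₗ_apply_apply]
      exact real_inner_comm v u
    · simp only [innerₗ_apply_apply]
      exact real_inner_self_eq_norm_sq u
  · rintro ⟨f, hfsym, hfnorm⟩ u v
    have expand : ∀ (w z : X) (t : ℝ),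
        ‖w + t • z‖^2 = ‖w‖^2 + 2 * t * f w z + t^2 * ‖z‖^2 := by
      intro w z t
      have h1 : ‖w + t • z‖^2 = f (w + t • z) (w + t • z) := (hfnorm _).symm
      rw [h1]
      simp only [map_add, map_smul, LinearMap.add_apply, LinearMap.smul_apply, smul_eq_mul]
      rw [hfnorm w, hfnorm z, hfsym z w]
      ring
    have lim : ∀ (w z : X) (l : Filter ℝ), l ≤ 𝓝 (0:ℝ) → (∀ᶠ t in l, t ≠ 0) →
        Tendsto (fun t : ℝ => (‖w + t • z‖^2 - ‖w‖^2) / (2*t)) l (𝓝 (f w z)) := by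
      intro w z l hl ht0
      have heq : (fun t : ℝ => (‖w + t • z‖^2 - ‖w‖^2) / (2*t)) =ᶠ[l]
          (fun t : ℝ => f w z + t * ‖z‖^2 / 2) := by
        filter_upwards [ht0] with t ht
        rw [expand w z t]
        field_simp
        ring
      have h0 : Tendsto (fun t : ℝ => f w z + t * ‖z‖^2 / 2) (𝓝 (0:ℝ))
          (𝓝 (f w z + 0 * ‖z‖^2 / 2)) := by
        apply Continuous.tendsto
        continuity
      have := (h0.mono_left hl).congr' heq.symm
      simpa using this
    have hP : ∀ w z : X, rhoP w z = f w z := by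
      intro w z
      exact (lim w z (𝓝[>] (0:ℝ)) nhdsWithin_le_nhds
        (by filter_upwards [self_mem_nhdsWithin] with t ht using ne_of_gt ht)).limUnder_eq
    have hM : ∀ w z : X, rhoM w z = f w z := by
      intro w z
      exact (lim w z (𝓝[<] (0:ℝ)) nhdsWithin_le_nhds
        (by filter_upwards [self_mem_nhdsWithin] with t ht using ne_of_lt ht)).limUnder_eq
    rw [rhoAB, rhoAB, hP, hM, hP, hM, hfsym u v]
end
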